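/- Let Sₙ be the sum of n i.i.d. St. Petersburg random variables. For every n ≥ 1 and every δ ∈ (0,1), lim P{Sₙ > x}/P{X₁ > x} = n as x → ∞ along x with fractional part {log₂ x} ≥ δ. -/

import Mathlib

open MeasureTheory ProbabilityTheory Filter Topology
open scoped ENNReal

lemma geom_tail (m : ℕ) : ∑' j : ℕ, ((2:ℝ≥0∞)^(m + j))⁻¹ = 2 * ((2:ℝ≥0∞)^m)⁻¹ := by
  have h : ∀ j : ℕ, ((2:ℝ≥0∞)^(m + j))⁻¹ = ((2:ℝ≥0∞)^m)⁻¹ * (2⁻¹)^j := by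
    intro j
    rw [pow_add, ENNReal.mul_inv (by simp) (by simp), ENNReal.inv_pow, ENNReal.inv_pow]
  simp_rw [h]
  rw [ENNReal.tsum_mul_left, ENNReal.tsum_geometric, ENNReal.one_sub_inv_two, mul_comm]
  congr 1
  simp

lemma bonferroni {Ω : Type*} [MeasurableSpace Ω] (μ : Measure Ω) (A : ℕ → Set Ω)
    (hA : ∀ i, MeasurableSet (A i)) (s : Finset ℕ) :
    ∑ i ∈ s, μ (A i) ≤ μ (⋃ i ∈ s, A i) + ∑ i ∈ s, ∑ j ∈ s.erase i, μ (A i ∩ A j) := by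
  induction s using Finset.cons_induction with
  | empty => simp
  | cons a t ha ih =>
    rw [Finset.sum_cons]
    have hpairs : ∑ i ∈ Finset.cons a t ha, ∑ j ∈ (Finset.cons a t ha).erase i, μ (A i ∩ A j)
        = ∑ j ∈ t, μ (A a ∩ A j) + (∑ i ∈ t, μ (A i ∩ A a)
          + ∑ i ∈ t, ∑ j ∈ t.erase i, μ (A i ∩ A j)) := by
      rw [Finset.sum_cons, Finset.erase_cons]
      congr 1
      rw [← Finset.sum_add_distrib]
      apply Finset.sum_congr rfl
      intro i hi
      have hne : a ≠ i := by rintro rfl; exact ha hi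
      have : (Finset.cons a t ha).erase i = Finset.cons a (t.erase i) (by
        simp [Finset.mem_erase, ha]) := by
        rw [Finset.cons_eq_insert, Finset.cons_eq_insert, Finset.erase_insert_of_ne hne]
      rw [this, Finset.sum_cons]
    rw [hpairs]
    have hU : (⋃ i ∈ Finset.cons a t ha, A i) = A a ∪ ⋃ i ∈ t, A i := by
      rw [Finset.cons_eq_insert, Finset.set_biUnion_insert]
    rw [hU]
    have key : μ (A a) + μ (⋃ i ∈ t, A i) ≤ μ (A a ∪ ⋃ i ∈ t, A i) + ∑ j ∈ t, μ (A a ∩ A j) := by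
      have h1 : μ (A a ∪ ⋃ i ∈ t, A i) + μ (A a ∩ ⋃ i ∈ t, A i) = μ (A a) + μ (⋃ i ∈ t, A i) :=
        measure_union_add_inter' (hA a) _
      have h2 : μ (A a ∩ ⋃ i ∈ t, A i) ≤ ∑ j ∈ t, μ (A a ∩ A j) := by
        rw [Set.inter_iUnion₂]
        exact (measure_biUnion_finset_le t _)
      calc μ (A a) + μ (⋃ i ∈ t, A i) = μ (A a ∪ ⋃ i ∈ t, A i) + μ (A a ∩ ⋃ i ∈ t, A i) := h1.symm
        _ ≤ _ := by gcongr
    calc μ (A a) + ∑ i ∈ t, μ (A i)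
        ≤ μ (A a) + (μ (⋃ i ∈ t, A i) + ∑ i ∈ t, ∑ j ∈ t.erase i, μ (A i ∩ A j)) := by gcongr
      _ = (μ (A a) + μ (⋃ i ∈ t, A i)) + ∑ i ∈ t, ∑ j ∈ t.erase i, μ (A i ∩ A j) := by ring
      _ ≤ (μ (A a ∪ ⋃ i ∈ t, A i) + ∑ j ∈ t, μ (A a ∩ A j)) + ∑ i ∈ t, ∑ j ∈ t.erase i, μ (A i ∩ A j) := by gcongr
      _ ≤ _ := by
          rw [add_assoc]
          gcongr
          exact le_add_self

section Aux
variable {Ω : Type*} [MeasurableSpace Ω] (μ : Measure Ω) [IsProbabilityMeasure μ]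
  (Y : Ω → ℝ) (hmY : Measurable Y)
  (hdY : ∀ k : ℕ, 1 ≤ k → μ {ω | Y ω = 2 ^ k} = ((2:ℝ≥0∞) ^ k)⁻¹)

lemma pow_inj_real {a b : ℕ} (h : (2:ℝ)^a = (2:ℝ)^b) : a = b := by
  have : StrictMono (fun k : ℕ => (2:ℝ)^k) := fun i j hij => by
    exact pow_lt_pow_right₀ one_lt_two hij
  exact this.injective h

omit [MeasurableSpace Ω] in
lemma disj_f : Pairwise (Function.onFun Disjoint (fun k => {ω : Ω | Y ω = (2:ℝ) ^ (k+1)})) := by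
  intro a b hab
  rw [Function.onFun, Set.disjoint_left]
  intro ω h1 h2
  simp only [Set.mem_setOf_eq] at h1 h2
  have h3 : (2:ℝ)^(a+1) = 2^(b+1) := by rw [← h1, h2]
  have h4 := pow_inj_real h3
  omega

include hmY hdY in
lemma range_full : μ (⋃ k : ℕ, {ω | Y ω = (2:ℝ) ^ (k+1)}) = 1 := by
  rw [measure_iUnion (disj_f Y) (fun k => hmY (measurableSet_singleton ((2:ℝ)^(k+1))))]
  have : ∀ k : ℕ, μ {ω | Y ω = (2:ℝ) ^ (k+1)} = ((2:ℝ≥0∞) ^ (1+k))⁻¹ := by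
    intro k
    rw [hdY (k+1) (by omega)]
    rw [add_comm]
  simp_rw [this]
  rw [geom_tail 1]
  rw [pow_one]
  exact ENNReal.mul_inv_cancel (by simp) (by simp)

include hmY hdY in
lemma tail_prob (y : ℝ) (p : ℕ) (hiff : ∀ k : ℕ, (y < 2 ^ (k+1) ↔ p ≤ k)) :
    μ {ω | y < Y ω} = 2 * ((2:ℝ≥0∞) ^ (p+1))⁻¹ := by
  set f : ℕ → Set Ω := fun k => {ω | Y ω = (2:ℝ) ^ (k+1)} with hf
  set A : Set Ω := {ω | y < Y ω} with hA
  have hmeasf : ∀ k, MeasurableSet (f k) := fun k => hmY (measurableSet_singleton ((2:ℝ)^(k+1)))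
  have hU : μ (⋃ k, f k) = 1 := range_full μ Y hmY hdY
  have hAmeas : MeasurableSet A := hmY measurableSet_Ioi
  have hc : μ (⋃ k, f k)ᶜ = 0 := by
    rw [measure_compl (MeasurableSet.iUnion hmeasf) (measure_ne_top _ _), hU]
    simp
  have hAU : μ A = μ (A ∩ ⋃ k, f k) := by
    apply le_antisymm
    · calc μ A ≤ μ ((A ∩ ⋃ k, f k) ∪ (⋃ k, f k)ᶜ) := by
            apply measure_mono
            intro ω hω
            by_cases h : ω ∈ ⋃ k, f k
            · exact Or.inl ⟨hω, h⟩
            · exact Or.inr h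
        _ ≤ μ (A ∩ ⋃ k, f k) + μ (⋃ k, f k)ᶜ := measure_union_le _ _
        _ = μ (A ∩ ⋃ k, f k) := by rw [hc, add_zero]
    · exact measure_mono Set.inter_subset_left
  rw [hAU, Set.inter_iUnion,
    measure_iUnion (fun a b hab => ((disj_f Y) hab).mono Set.inter_subset_right
      Set.inter_subset_right) (fun k => hAmeas.inter (hmeasf k))]
  have hterm : ∀ k : ℕ, μ (A ∩ f k) = if p ≤ k then ((2:ℝ≥0∞)^(k+1))⁻¹ else 0 := by
    intro k
    by_cases hk : p ≤ k
    · rw [if_pos hk]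
      have hsub : f k ⊆ A := by
        intro ω hω
        simp only [hf, Set.mem_setOf_eq] at hω
        simp only [hA, Set.mem_setOf_eq, hω]
        exact (hiff k).mpr hk
      rw [Set.inter_eq_self_of_subset_right hsub]
      exact hdY (k+1) (by omega)
    · rw [if_neg hk]
      have : A ∩ f k = ∅ := by
        ext ω
        simp only [hf, hA, Set.mem_inter_iff, Set.mem_setOf_eq, Set.mem_empty_iff_false,
          iff_false, not_and]
        intro h1 h2
        exact hk ((hiff k).mp (h2 ▸ h1))
      rw [this, measure_empty]
  simp_rw [show ∀ k : ℕ, μ (A ∩ {ω | Y ω = (2:ℝ) ^ (k+1)}) = if p ≤ k then ((2:ℝ≥0∞)^(k+1))⁻¹ else 0 from hterm]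
  have hinj : Function.Injective (fun j : ℕ => j + p) := add_left_injective p
  rw [← Function.Injective.tsum_eq hinj (f := fun k => if p ≤ k then ((2:ℝ≥0∞)^(k+1))⁻¹ else 0)
    (by
      intro x hx
      have hpx : p ≤ x := by
        by_contra h
        simp only [Function.mem_support] at hx
        exact hx (if_neg h)
      exact ⟨x - p, show x - p + p = x by omega⟩)]
  have : ∀ j : ℕ, (if p ≤ j + p then ((2:ℝ≥0∞)^(j+p+1))⁻¹ else 0) = ((2:ℝ≥0∞)^((p+1)+j))⁻¹ := by
    intro j
    rw [if_pos (by omega), show j+p+1 = (p+1)+j from by omega]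
  simp only [this]
  exact geom_tail (p+1)
end Aux

set_option maxHeartbeats 1000000 in
lemma main_est {Ω : Type*} [MeasurableSpace Ω] (μ : Measure Ω) [IsProbabilityMeasure μ]
    (X : ℕ → Ω → ℝ) (hm : ∀ i, Measurable (X i))
    (hindep : iIndepFun X μ)
    (hd : ∀ i, ∀ k : ℕ, 1 ≤ k → μ {ω | X i ω = 2 ^ k} = ((2 : ℝ≥0∞) ^ k)⁻¹)
    (n : ℕ) (hn : 1 ≤ n) (δ : ℝ) (hδ0 : 0 < δ)
    (r : ℕ) (hr : (n:ℝ) * 2 * (2:ℝ)⁻¹ ^ r ≤ 2 ^ (δ:ℝ) - 1)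
    (x : ℝ) (hx : (2:ℝ)^(r+3) ≤ x) (hxs : δ ≤ Int.fract (Real.logb 2 x)) :
    ((n:ℝ) - (2 * (n:ℝ)^2 * (2:ℝ)^r * (2:ℝ)^r) / x ≤
        (μ {ω | x < ∑ i ∈ Finset.range n, X i ω}).toReal / (μ {ω | x < X 0 ω}).toReal ∧
      (μ {ω | x < ∑ i ∈ Finset.range n, X i ω}).toReal / (μ {ω | x < X 0 ω}).toReal ≤
        (n:ℝ) + (2 * (n:ℝ)^2 * (2:ℝ)^r * (2:ℝ)^r) / x) := by
  have hx0 : (0:ℝ) < x := lt_of_lt_of_le (by positivity) hx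
  -- basic log facts
  have hlogb : ((r:ℝ)+3) ≤ Real.logb 2 x := by
    rw [Real.le_logb_iff_rpow_le one_lt_two hx0]
    calc (2:ℝ)^((r:ℝ)+3) = (2:ℝ)^(((r+3 : ℕ)):ℝ) := by push_cast; ring_nf
      _ = (2:ℝ)^(r+3:ℕ) := Real.rpow_natCast 2 (r+3)
      _ ≤ x := hx
  have hfl : (r+3 : ℤ) ≤ ⌊Real.logb 2 x⌋ := Int.le_floor.mpr (by push_cast; linarith)
  set L : ℕ := (⌊Real.logb 2 x⌋).toNat with hLdef
  have hLZ : (L:ℤ) = ⌊Real.logb 2 x⌋ := Int.toNat_of_nonneg (by omega)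
  have hLr : r + 3 ≤ L := by omega
  have hLfloor : ((L:ℕ):ℝ) ≤ Real.logb 2 x := by
    have h1 : (((L:ℤ)):ℝ) = ((⌊Real.logb 2 x⌋ : ℤ):ℝ) := by exact_mod_cast congrArg (fun z : ℤ => (z:ℝ)) hLZ
    have h2 := Int.floor_le (Real.logb 2 x)
    push_cast at h1 ⊢
    linarith
  have hlogup : Real.logb 2 x < (L:ℝ) + 1 := by
    have h1 := Int.lt_floor_add_one (Real.logb 2 x)
    have h2 : ((⌊Real.logb 2 x⌋ : ℤ):ℝ) = (L:ℝ) := by exact_mod_cast (congrArg (fun z : ℤ => (z:ℝ)) hLZ).symm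
    linarith
  have hxeq : (2:ℝ) ^ Real.logb 2 x = x := Real.rpow_logb two_pos (by norm_num) hx0
  have hxL : (2:ℝ)^L ≤ x := by
    calc (2:ℝ)^L = (2:ℝ)^((L:ℕ):ℝ) := (Real.rpow_natCast 2 L).symm
      _ ≤ (2:ℝ)^(Real.logb 2 x) := Real.rpow_le_rpow_of_exponent_le one_le_two hLfloor
      _ = x := hxeq
  have hxU : x < (2:ℝ)^(L+1) := by
    calc x = (2:ℝ)^Real.logb 2 x := hxeq.symm
      _ < (2:ℝ)^((L:ℝ)+1) := Real.rpow_lt_rpow_of_exponent_lt one_lt_two hlogup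
      _ = (2:ℝ)^(L+1:ℕ) := by rw [← Real.rpow_natCast 2 (L+1)]; push_cast; ring_nf
  have hfract : δ + (L:ℝ) ≤ Real.logb 2 x := by
    have h1 : Int.fract (Real.logb 2 x) = Real.logb 2 x - ⌊Real.logb 2 x⌋ := rfl
    have h2 : ((⌊Real.logb 2 x⌋ : ℤ):ℝ) = (L:ℝ) := by exact_mod_cast (congrArg (fun z : ℤ => (z:ℝ)) hLZ).symm
    rw [h1, h2] at hxs
    linarith
  set a : ℝ := (2:ℝ)^L with ha_def
  have ha : (0:ℝ) < a := by positivity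
  have hxδ : a * (2:ℝ)^(δ:ℝ) ≤ x := by
    calc a * (2:ℝ)^(δ:ℝ) = (2:ℝ)^((L:ℝ)+δ) := by
          rw [Real.rpow_add two_pos, Real.rpow_natCast]
      _ ≤ (2:ℝ)^(Real.logb 2 x) := Real.rpow_le_rpow_of_exponent_le one_le_two (by linarith)
      _ = x := hxeq
  set b : ℝ := (2:ℝ)^r with hb_def
  have hb0 : (0:ℝ) < b := by positivity
  have hb1 : (1:ℝ) ≤ b := one_le_pow₀ one_le_two
  set T : ℕ := L + 1 - r with hT_def
  have hTr : T + r = L + 1 := by omega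
  have h2a : (2:ℝ)^(L+1) = 2*a := by rw [ha_def, pow_succ]; ring
  have ht0 : (0:ℝ) < (2:ℝ)^T := by positivity
  have h2T' : (2:ℝ)^T = 2*a/b := by
    rw [eq_div_iff hb0.ne']
    rw [hb_def, ← pow_add, hTr, h2a]
  have hnt : (n:ℝ) * (2:ℝ)^T + a ≤ x := by
    have h1 : (n:ℝ) * (2:ℝ)^T = ((n:ℝ) * 2 * (2:ℝ)⁻¹^r) * a := by
      rw [h2T', inv_pow, ← hb_def]
      field_simp
    have h2 : ((n:ℝ)*2*(2:ℝ)⁻¹^r) * a ≤ (2^(δ:ℝ) - 1) * a := mul_le_mul_of_nonneg_right hr ha.le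
    nlinarith [hxδ]
  have hn1 : (1:ℝ) ≤ (n:ℝ) := by exact_mod_cast hn
  have hntx : (n:ℝ) * (2:ℝ)^T ≤ x := by linarith
  set y : ℝ := x - ((n:ℝ)-1) * (2:ℝ)^T with hy_def
  have hy_low : a ≤ y := by
    have h1 : ((n:ℝ)-1) * 2^T ≤ (n:ℝ) * 2^T := by nlinarith
    rw [hy_def]; linarith
  have hy_up : y ≤ x := by
    have h1 : 0 ≤ ((n:ℝ)-1) * 2^T := mul_nonneg (by linarith) ht0.le
    rw [hy_def]; linarith
  -- the iff conditions
  have hiff_gen : ∀ z : ℝ, a ≤ z → z < 2^(L+1) → ∀ k : ℕ, (z < 2^(k+1) ↔ L ≤ k) := by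
    intro z hz1 hz2 k
    constructor
    · intro h
      by_contra hk
      have hk1 : k + 1 ≤ L := by omega
      have h2 : (2:ℝ)^(k+1) ≤ 2^L := pow_le_pow_right₀ one_le_two hk1
      rw [ha_def] at hz1
      linarith
    · intro hk
      have h2 : (2:ℝ)^(L+1) ≤ 2^(k+1) := pow_le_pow_right₀ one_le_two (by omega)
      linarith
  have hiff_x := hiff_gen x hxL hxU
  have hiff_y := hiff_gen y hy_low (lt_of_le_of_lt hy_up hxU)
  have hiff_t : ∀ k : ℕ, ((2:ℝ)^T < 2^(k+1) ↔ T ≤ k) := by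
    intro k; rw [pow_lt_pow_iff_right₀ one_lt_two]; omega
  -- probabilities
  set Q : ℝ≥0∞ := 2 * ((2:ℝ≥0∞)^(L+1))⁻¹ with hQ
  set Qt : ℝ≥0∞ := 2 * ((2:ℝ≥0∞)^(T+1))⁻¹ with hQt
  clear_value Q Qt
  have hPx : ∀ i, μ {ω | x < X i ω} = Q := by
    intro i; rw [hQ]; exact tail_prob μ (X i) (hm i) (hd i) x L hiff_x
  have hPy : ∀ i, μ {ω | y < X i ω} = Q := by
    intro i; rw [hQ]; exact tail_prob μ (X i) (hm i) (hd i) y L hiff_y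
  have hPt : ∀ i, μ {ω | (2:ℝ)^T < X i ω} = Qt := by
    intro i; rw [hQt]; exact tail_prob μ (X i) (hm i) (hd i) ((2:ℝ)^T) T hiff_t
  have hprod : ∀ (c c' : ℝ) (i j : ℕ), i ≠ j →
      μ ({ω | c < X i ω} ∩ {ω | c' < X j ω}) = μ {ω | c < X i ω} * μ {ω | c' < X j ω} := by
    intro c c' i j hij
    exact (hindep.indepFun hij).measure_inter_preimage_eq_mul (Set.Ioi c) (Set.Ioi c')
      measurableSet_Ioi measurableSet_Ioi
  -- upper bound
  have hup : μ {ω | x < ∑ i ∈ Finset.range n, X i ω} ≤ (n:ℝ≥0∞) * Q + (n:ℝ≥0∞) * ((n:ℝ≥0∞) * (Qt * Qt)) := by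
    have hsub : {ω | x < ∑ i ∈ Finset.range n, X i ω} ⊆
        (⋃ i ∈ Finset.range n, {ω | y < X i ω}) ∪
        (⋃ i ∈ Finset.range n, ⋃ j ∈ (Finset.range n).erase i,
          ({ω | (2:ℝ)^T < X i ω} ∩ {ω | (2:ℝ)^T < X j ω})) := by
      intro ω hω
      simp only [Set.mem_setOf_eq] at hω
      by_cases htwo : ∃ i ∈ Finset.range n, ∃ j ∈ (Finset.range n).erase i,
          (2:ℝ)^T < X i ω ∧ (2:ℝ)^T < X j ω
      · right
        obtain ⟨i, hi, j, hj, h1, h2⟩ := htwo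
        exact Set.mem_biUnion hi (Set.mem_biUnion hj ⟨h1, h2⟩)
      · left
        push_neg at htwo
        by_cases hone : ∃ i ∈ Finset.range n, (2:ℝ)^T < X i ω
        · obtain ⟨i, hi, hti⟩ := hone
          have hall : ∀ j ∈ (Finset.range n).erase i, X j ω ≤ (2:ℝ)^T := by
            intro j hj
            exact htwo i hi j hj hti
          have hsum : ∑ j ∈ (Finset.range n).erase i, X j ω ≤ ((n:ℝ) - 1) * 2^T := by
            have h1 := Finset.sum_le_card_nsmul ((Finset.range n).erase i) (fun j => X j ω)
              ((2:ℝ)^T) hall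
            rw [Finset.card_erase_of_mem hi, Finset.card_range, nsmul_eq_mul] at h1
            have h2 : (((n-1 : ℕ)):ℝ) = (n:ℝ) - 1 := by
              have := hn; push_cast [this]; ring
            rw [h2] at h1
            exact h1
          have hXi : y < X i ω := by
            have h3 := Finset.add_sum_erase (Finset.range n) (fun j => X j ω) hi
            rw [hy_def]
            linarith [h3 ▸ hω]
          exact Set.mem_biUnion hi hXi
        · push_neg at hone
          exfalso
          have h4 : ∑ j ∈ Finset.range n, X j ω ≤ (n:ℝ) * 2^T := by
            have h5 := Finset.sum_le_card_nsmul (Finset.range n) (fun j => X j ω)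
              ((2:ℝ)^T) (fun j hj => (hone j hj))
            rwa [Finset.card_range, nsmul_eq_mul] at h5
          linarith
    calc μ {ω | x < ∑ i ∈ Finset.range n, X i ω}
        ≤ μ ((⋃ i ∈ Finset.range n, {ω | y < X i ω}) ∪
          (⋃ i ∈ Finset.range n, ⋃ j ∈ (Finset.range n).erase i,
            ({ω | (2:ℝ)^T < X i ω} ∩ {ω | (2:ℝ)^T < X j ω}))) := measure_mono hsub
      _ ≤ μ (⋃ i ∈ Finset.range n, {ω | y < X i ω}) +
          μ (⋃ i ∈ Finset.range n, ⋃ j ∈ (Finset.range n).erase i,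
            ({ω | (2:ℝ)^T < X i ω} ∩ {ω | (2:ℝ)^T < X j ω})) := measure_union_le _ _
      _ ≤ (n:ℝ≥0∞) * Q + (n:ℝ≥0∞) * ((n:ℝ≥0∞) * (Qt * Qt)) := by
          gcongr
          · calc μ (⋃ i ∈ Finset.range n, {ω | y < X i ω})
                ≤ ∑ i ∈ Finset.range n, μ {ω | y < X i ω} := measure_biUnion_finset_le _ _
              _ = ∑ _i ∈ Finset.range n, Q := Finset.sum_congr rfl (fun i _ => hPy i)
              _ = (n:ℝ≥0∞) * Q := by
                  rw [Finset.sum_const, Finset.card_range, nsmul_eq_mul]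
          · calc μ (⋃ i ∈ Finset.range n, ⋃ j ∈ (Finset.range n).erase i,
                  ({ω | (2:ℝ)^T < X i ω} ∩ {ω | (2:ℝ)^T < X j ω}))
                ≤ ∑ i ∈ Finset.range n, μ (⋃ j ∈ (Finset.range n).erase i,
                  ({ω | (2:ℝ)^T < X i ω} ∩ {ω | (2:ℝ)^T < X j ω})) := measure_biUnion_finset_le _ _
              _ ≤ ∑ i ∈ Finset.range n, ∑ j ∈ (Finset.range n).erase i,
                  μ ({ω | (2:ℝ)^T < X i ω} ∩ {ω | (2:ℝ)^T < X j ω}) :=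
                  Finset.sum_le_sum (fun i _ => measure_biUnion_finset_le _ _)
              _ ≤ ∑ _i ∈ Finset.range n, (n:ℝ≥0∞) * (Qt * Qt) := by
                  apply Finset.sum_le_sum
                  intro i hi
                  have heq : ∀ j ∈ (Finset.range n).erase i,
                      μ ({ω | (2:ℝ)^T < X i ω} ∩ {ω | (2:ℝ)^T < X j ω}) = Qt * Qt := by
                    intro j hj
                    rw [hprod _ _ i j (Finset.mem_erase.mp hj).1.symm, hPt i, hPt j]
                  rw [Finset.sum_congr rfl heq, Finset.sum_const, nsmul_eq_mul]
                  apply mul_le_mul_left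
                  have hcard : ((Finset.range n).erase i).card ≤ n := by
                    rw [Finset.card_erase_of_mem hi, Finset.card_range]; omega
                  exact_mod_cast hcard
              _ = (n:ℝ≥0∞) * ((n:ℝ≥0∞) * (Qt * Qt)) := by
                  rw [Finset.sum_const, Finset.card_range, nsmul_eq_mul]
  -- lower bound
  have hlow : (n:ℝ≥0∞) * Q ≤ μ {ω | x < ∑ i ∈ Finset.range n, X i ω} + (n:ℝ≥0∞) * ((n:ℝ≥0∞) * (Q * Q)) := by
    have hAm : ∀ i : ℕ, MeasurableSet {ω | x < X i ω} := fun i => (hm i) measurableSet_Ioi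
    have hbon := bonferroni μ (fun i => {ω | x < X i ω}) hAm (Finset.range n)
    have hsum : ∑ i ∈ Finset.range n, μ {ω | x < X i ω} = (n:ℝ≥0∞) * Q := by
      rw [Finset.sum_congr rfl (fun i _ => hPx i), Finset.sum_const, Finset.card_range, nsmul_eq_mul]
    have hpairs : ∑ i ∈ Finset.range n, ∑ j ∈ (Finset.range n).erase i,
        μ ({ω | x < X i ω} ∩ {ω | x < X j ω}) ≤ (n:ℝ≥0∞) * ((n:ℝ≥0∞) * (Q * Q)) := by
      calc ∑ i ∈ Finset.range n, ∑ j ∈ (Finset.range n).erase i,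
            μ ({ω | x < X i ω} ∩ {ω | x < X j ω})
          ≤ ∑ _i ∈ Finset.range n, (n:ℝ≥0∞) * (Q * Q) := by
            apply Finset.sum_le_sum
            intro i hi
            have heq : ∀ j ∈ (Finset.range n).erase i,
                μ ({ω | x < X i ω} ∩ {ω | x < X j ω}) = Q * Q := by
              intro j hj
              rw [hprod _ _ i j (Finset.mem_erase.mp hj).1.symm, hPx i, hPx j]
            rw [Finset.sum_congr rfl heq, Finset.sum_const, nsmul_eq_mul]
            apply mul_le_mul_left
            have hcard : ((Finset.range n).erase i).card ≤ n := by
              rw [Finset.card_erase_of_mem hi, Finset.card_range]; omega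
            exact_mod_cast hcard
        _ = (n:ℝ≥0∞) * ((n:ℝ≥0∞) * (Q * Q)) := by
            rw [Finset.sum_const, Finset.card_range, nsmul_eq_mul]
    have hGc : μ (⋃ i ∈ Finset.range n, (⋃ k : ℕ, {ω | X i ω = (2:ℝ)^(k+1)})ᶜ) = 0 := by
      apply le_antisymm _ zero_le
      calc μ (⋃ i ∈ Finset.range n, (⋃ k : ℕ, {ω | X i ω = (2:ℝ)^(k+1)})ᶜ)
          ≤ ∑ i ∈ Finset.range n, μ ((⋃ k : ℕ, {ω | X i ω = (2:ℝ)^(k+1)})ᶜ) :=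
            measure_biUnion_finset_le _ _
        _ = 0 := by
            apply Finset.sum_eq_zero
            intro i _
            have hms : MeasurableSet (⋃ k : ℕ, {ω | X i ω = (2:ℝ)^(k+1)}) :=
              MeasurableSet.iUnion (fun k => (hm i) (measurableSet_singleton ((2:ℝ)^(k+1))))
            rw [measure_compl hms (measure_ne_top _ _), range_full μ (X i) (hm i) (hd i)]
            simp
    have hsubU : (⋃ i ∈ Finset.range n, {ω | x < X i ω}) ⊆
        {ω | x < ∑ i ∈ Finset.range n, X i ω} ∪
        (⋃ i ∈ Finset.range n, (⋃ k : ℕ, {ω | X i ω = (2:ℝ)^(k+1)})ᶜ) := by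
      intro ω hω
      by_cases hg : ω ∈ ⋃ i ∈ Finset.range n, (⋃ k : ℕ, {ω | X i ω = (2:ℝ)^(k+1)})ᶜ
      · exact Or.inr hg
      · left
        have hpos : ∀ j ∈ Finset.range n, 0 ≤ X j ω := by
          intro j hj
          have hmem : ω ∈ ⋃ k : ℕ, {ω | X j ω = (2:ℝ)^(k+1)} := by
            by_contra hc
            exact hg (Set.mem_biUnion hj hc)
          obtain ⟨k, hk⟩ := Set.mem_iUnion.mp hmem
          simp only [Set.mem_setOf_eq] at hk
          rw [hk]
          positivity
        simp only [Set.mem_iUnion, exists_prop] at hω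
        obtain ⟨i, hi, hxi⟩ := hω
        simp only [Set.mem_setOf_eq] at hxi ⊢
        have h6 := Finset.single_le_sum hpos hi
        linarith
    calc (n:ℝ≥0∞) * Q = ∑ i ∈ Finset.range n, μ {ω | x < X i ω} := hsum.symm
      _ ≤ μ (⋃ i ∈ Finset.range n, {ω | x < X i ω}) + ∑ i ∈ Finset.range n,
          ∑ j ∈ (Finset.range n).erase i, μ ({ω | x < X i ω} ∩ {ω | x < X j ω}) := hbon
      _ ≤ (μ {ω | x < ∑ i ∈ Finset.range n, X i ω} +
            μ (⋃ i ∈ Finset.range n, (⋃ k : ℕ, {ω | X i ω = (2:ℝ)^(k+1)})ᶜ)) +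
          (n:ℝ≥0∞) * ((n:ℝ≥0∞) * (Q * Q)) := by
          gcongr
          calc μ (⋃ i ∈ Finset.range n, {ω | x < X i ω})
              ≤ μ ({ω | x < ∑ i ∈ Finset.range n, X i ω} ∪
                (⋃ i ∈ Finset.range n, (⋃ k : ℕ, {ω | X i ω = (2:ℝ)^(k+1)})ᶜ)) :=
                measure_mono hsubU
            _ ≤ _ := measure_union_le _ _
      _ = μ {ω | x < ∑ i ∈ Finset.range n, X i ω} + (n:ℝ≥0∞) * ((n:ℝ≥0∞) * (Q * Q)) := by
          rw [hGc, add_zero]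
  -- convert to reals
  have hQ_toReal : Q.toReal = a⁻¹ := by
    rw [hQ, ENNReal.toReal_mul, ENNReal.toReal_inv, ENNReal.toReal_pow, ha_def]
    norm_num [pow_succ]
    field_simp
  have hQt_toReal : Qt.toReal = ((2:ℝ)^T)⁻¹ := by
    rw [hQt, ENNReal.toReal_mul, ENNReal.toReal_inv, ENNReal.toReal_pow]
    norm_num [pow_succ]
    field_simp
  have h2ne : (2:ℝ≥0∞) ≠ ⊤ := ENNReal.ofNat_ne_top
  have hinvL : ((2:ℝ≥0∞)^(L+1))⁻¹ ≠ ⊤ := ENNReal.inv_ne_top.mpr (by positivity)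
  have hinvT : ((2:ℝ≥0∞)^(T+1))⁻¹ ≠ ⊤ := ENNReal.inv_ne_top.mpr (by positivity)
  have hQfin : Q ≠ ⊤ := by rw [hQ]; exact ENNReal.mul_ne_top h2ne hinvL
  have hQtfin : Qt ≠ ⊤ := by rw [hQt]; exact ENNReal.mul_ne_top h2ne hinvT
  have hnfin : (n:ℝ≥0∞) ≠ ⊤ := ENNReal.natCast_ne_top n
  have hnQfin : (n:ℝ≥0∞) * Q ≠ ⊤ := ENNReal.mul_ne_top hnfin hQfin
  have hupfin : (n:ℝ≥0∞) * ((n:ℝ≥0∞) * (Qt*Qt)) ≠ ⊤ :=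
    ENNReal.mul_ne_top hnfin (ENNReal.mul_ne_top hnfin (ENNReal.mul_ne_top hQtfin hQtfin))
  have hQQfin : (n:ℝ≥0∞) * ((n:ℝ≥0∞) * (Q*Q)) ≠ ⊤ :=
    ENNReal.mul_ne_top hnfin (ENNReal.mul_ne_top hnfin (ENNReal.mul_ne_top hQfin hQfin))
  set Sr : ℝ := (μ {ω | x < ∑ i ∈ Finset.range n, X i ω}).toReal with hSr
  have hSr0 : 0 ≤ Sr := ENNReal.toReal_nonneg
  have hupR : Sr ≤ (n:ℝ) * a⁻¹ + (n:ℝ) * ((n:ℝ) * (((2:ℝ)^T)⁻¹ * ((2:ℝ)^T)⁻¹)) := by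
    have h7 := ENNReal.toReal_mono (ENNReal.add_ne_top.mpr ⟨hnQfin, hupfin⟩) hup
    rw [ENNReal.toReal_add hnQfin hupfin, ENNReal.toReal_mul, ENNReal.toReal_mul,
      ENNReal.toReal_mul, ENNReal.toReal_mul, hQ_toReal, hQt_toReal] at h7
    exact h7
  have hlowR : (n:ℝ) * a⁻¹ ≤ Sr + (n:ℝ) * ((n:ℝ) * (a⁻¹ * a⁻¹)) := by
    have h7 := ENNReal.toReal_mono
      (ENNReal.add_ne_top.mpr ⟨measure_ne_top _ _, hQQfin⟩) hlow
    rw [ENNReal.toReal_add (measure_ne_top _ _) hQQfin, ENNReal.toReal_mul, ENNReal.toReal_mul,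
      ENNReal.toReal_mul, ENNReal.toReal_mul, hQ_toReal] at h7
    exact h7
  have hden : (μ {ω | x < X 0 ω}).toReal = a⁻¹ := by rw [hPx 0, hQ_toReal]
  have hdiv : Sr / a⁻¹ = Sr * a := by rw [div_eq_mul_inv, inv_inv]
  rw [hden, hdiv]
  clear_value Sr y a b T L
  -- final arithmetic
  have hx2a : x ≤ 2*a := by rw [h2a] at hxU; linarith
  have hKx1 : (n:ℝ)^2 * (b*b) / a ≤ (2 * (n:ℝ)^2 * b * b) / x := by
    rw [div_le_div_iff₀ ha hx0]
    have hc : (0:ℝ) ≤ (n:ℝ)^2*(b*b) := by positivity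
    have hd2 : (n:ℝ)^2*(b*b)*x ≤ (n:ℝ)^2*(b*b)*(2*a) := mul_le_mul_of_nonneg_left hx2a hc
    linarith
  have hta : ((2:ℝ)^T)⁻¹ * ((2:ℝ)^T)⁻¹ * a = b*b/(4*a) := by
    rw [h2T', inv_div, div_mul_div_comm, div_mul_eq_mul_div,
      div_eq_div_iff (by positivity) (by positivity)]
    ring
  constructor
  · -- lower
    have h8 := mul_le_mul_of_nonneg_right hlowR ha.le
    have ekey : a⁻¹ * a = 1 := inv_mul_cancel₀ ha.ne'
    have e1 : ((n:ℝ) * a⁻¹) * a = n := by rw [mul_assoc, ekey, mul_one]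
    have e2 : (Sr + (n:ℝ) * ((n:ℝ) * (a⁻¹ * a⁻¹))) * a = Sr * a + (n:ℝ)*(n:ℝ)*a⁻¹ := by
      have e3 : (a⁻¹ * a⁻¹) * a = a⁻¹ := by rw [mul_assoc, ekey, mul_one]
      calc (Sr + (n:ℝ) * ((n:ℝ) * (a⁻¹ * a⁻¹))) * a
          = Sr * a + (n:ℝ)*(n:ℝ)*((a⁻¹ * a⁻¹) * a) := by ring
        _ = Sr * a + (n:ℝ)*(n:ℝ)*a⁻¹ := by rw [e3]
    rw [e1, e2] at h8
    have h9 : (n:ℝ)*(n:ℝ)*a⁻¹ ≤ (2 * (n:ℝ)^2 * b * b) / x := by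
      have h10 : (n:ℝ)*(n:ℝ)*a⁻¹ ≤ (n:ℝ)^2 * (b*b)/a := by
        have hbb : (1:ℝ) ≤ b*b := by nlinarith
        have h12 : (n:ℝ)*(n:ℝ) ≤ (n:ℝ)*(n:ℝ)*(b*b) :=
          le_mul_of_one_le_right (by positivity) hbb
        have h11 : (n:ℝ)*(n:ℝ)*a⁻¹ ≤ ((n:ℝ)*(n:ℝ)*(b*b))*a⁻¹ :=
          mul_le_mul_of_nonneg_right h12 (inv_nonneg.mpr ha.le)
        have e4 : (n:ℝ)^2 * (b*b)/a = ((n:ℝ)*(n:ℝ)*(b*b))*a⁻¹ := by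
          rw [sq, div_eq_mul_inv]; try ring
        linarith
      linarith
    linarith
  · -- upper
    have h8 := mul_le_mul_of_nonneg_right hupR ha.le
    have ekey : a⁻¹ * a = 1 := inv_mul_cancel₀ ha.ne'
    have e1 : ((n:ℝ) * a⁻¹ + (n:ℝ) * ((n:ℝ) * (((2:ℝ)^T)⁻¹ * ((2:ℝ)^T)⁻¹))) * a
        = (n:ℝ) + (n:ℝ)*(n:ℝ)*(((2:ℝ)^T)⁻¹ * ((2:ℝ)^T)⁻¹ * a) := by
      calc ((n:ℝ) * a⁻¹ + (n:ℝ) * ((n:ℝ) * (((2:ℝ)^T)⁻¹ * ((2:ℝ)^T)⁻¹))) * a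
          = (n:ℝ) * (a⁻¹ * a) + (n:ℝ)*(n:ℝ)*(((2:ℝ)^T)⁻¹ * ((2:ℝ)^T)⁻¹ * a) := by ring
        _ = _ := by rw [ekey, mul_one]
    rw [e1, hta] at h8
    have h9 : (n:ℝ)*(n:ℝ)*(b*b/(4*a)) ≤ (2 * (n:ℝ)^2 * b * b) / x := by
      have h10 : (n:ℝ)*(n:ℝ)*(b*b/(4*a)) ≤ (n:ℝ)^2 * (b*b)/a := by
        rw [sq]
        have hpos : (0:ℝ) ≤ (n:ℝ)*(n:ℝ)*(b*b)/a := by positivity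
        have : (n:ℝ)*(n:ℝ)*(b*b/(4*a)) = ((n:ℝ)*(n:ℝ)*(b*b)/a)/4 := by ring
        rw [this]
        linarith [div_le_self hpos (by norm_num : (1:ℝ) ≤ 4)]
      linarith
    linarith

/-- For `Sₙ` the sum of `n` i.i.d. St. Petersburg random variables, `n ≥ 1` and
`δ ∈ (0,1)`: `P{Sₙ > x}/P{X₁ > x} → n` as `x → ∞` along `{log₂ x} ≥ δ`. -/
theorem stmt_7 {Ω : Type*} [MeasurableSpace Ω] (μ : Measure Ω) [IsProbabilityMeasure μ]
    (X : ℕ → Ω → ℝ) (hm : ∀ i, Measurable (X i))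
    (hindep : iIndepFun X μ)
    (hd : ∀ i, ∀ k : ℕ, 1 ≤ k → μ {ω | X i ω = 2 ^ k} = ((2 : ℝ≥0∞) ^ k)⁻¹)
    (n : ℕ) (hn : 1 ≤ n) (δ : ℝ) (hδ : δ ∈ Set.Ioo (0 : ℝ) 1) :
    Tendsto (fun x : ℝ =>
        (μ {ω | x < ∑ i ∈ Finset.range n, X i ω}).toReal /
          (μ {ω | x < X 0 ω}).toReal)
      (atTop ⊓ 𝓟 {x : ℝ | δ ≤ Int.fract (Real.logb 2 x)}) (𝓝 n) := by
  obtain ⟨hδ0, hδ1⟩ := hδ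
  -- choose r
  have h2δ : (1:ℝ) < 2 ^ (δ:ℝ) := Real.one_lt_rpow_iff_of_pos two_pos |>.mpr (Or.inl ⟨one_lt_two, hδ0⟩)
  obtain ⟨r, hr⟩ : ∃ r : ℕ, (n:ℝ) * 2 * (2:ℝ)⁻¹ ^ r ≤ 2 ^ (δ:ℝ) - 1 := by
    have h0 : Tendsto (fun r : ℕ => (n:ℝ) * 2 * (2:ℝ)⁻¹ ^ r) atTop (𝓝 0) := by
      have := (tendsto_pow_atTop_nhds_zero_of_lt_one (by norm_num : (0:ℝ) ≤ 2⁻¹)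
        (by norm_num : (2:ℝ)⁻¹ < 1)).const_mul ((n:ℝ) * 2)
      simpa using this
    exact ((h0.eventually (eventually_le_nhds (by linarith))).mono (fun r h => h)).exists
  set K : ℝ := 2 * (n:ℝ)^2 * (2:ℝ)^r * (2:ℝ)^r with hK
  have hKpos : 0 < K := by positivity
  -- squeeze
  have hKx : Tendsto (fun x : ℝ => K / x) atTop (𝓝 0) := by
    simpa [div_eq_mul_inv] using tendsto_inv_atTop_zero.const_mul K
  set F : Filter ℝ := atTop ⊓ 𝓟 {x : ℝ | δ ≤ Int.fract (Real.logb 2 x)} with hF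
  have hKxF : Tendsto (fun x : ℝ => K / x) F (𝓝 0) := hKx.mono_left inf_le_left
  have h_lo : Tendsto (fun x : ℝ => (n:ℝ) - K / x) F (𝓝 n) := by
    have := (tendsto_const_nhds (α := ℝ) (f := F) (x := (n:ℝ))).sub hKxF
    simpa using this
  have h_hi : Tendsto (fun x : ℝ => (n:ℝ) + K / x) F (𝓝 n) := by
    have := (tendsto_const_nhds (α := ℝ) (f := F) (x := (n:ℝ))).add hKxF
    simpa using this
  have hev : ∀ᶠ x in F,
      ((n:ℝ) - K / x ≤ (μ {ω | x < ∑ i ∈ Finset.range n, X i ω}).toReal /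
          (μ {ω | x < X 0 ω}).toReal ∧
        (μ {ω | x < ∑ i ∈ Finset.range n, X i ω}).toReal /
          (μ {ω | x < X 0 ω}).toReal ≤ (n:ℝ) + K / x) := by
    rw [hF, eventually_inf_principal]
    filter_upwards [eventually_ge_atTop ((2:ℝ)^(r+3))] with x hx hxs
    have h := main_est μ X hm hindep hd n hn δ hδ0 r hr x hx hxs
    rw [hK]
    exact h
  exact tendsto_of_tendsto_of_tendsto_of_le_of_le' h_lo h_hi
    (hev.mono fun x h => h.1) (hev.mono fun x h => h.2)
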